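/- Let M be a matroid on a finite ground set E, let ≤ be a linear order on E, let a, b ∈ E with a < b and no element strictly between a and b in ≤, and let ≤′ be the linear order obtained from ≤ by swapping a and b (so b immediately precedes a in ≤′ and all other comparisons are unchanged). Then either B_≤(M) = B_{≤′}(M), or the symmetric difference B_≤(M) △ B_{≤′}(M) equals {a, b}. -/

import Mathlib

open Matroid

variable {α : Type*}

/-- `B₀` is the lex-first basis of the matroid `M` with respect to the order relation `le`:
it is a basis, and for every other basis `B'`, the `le`-least element of the symmetric
difference `B₀ ∆ B'` belongs to `B₀`. -/
def IsLexFirstBasis (M : Matroid α) (le : α → α → Prop) (B₀ : Set α) : Prop :=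
  M.IsBase B₀ ∧ ∀ B', M.IsBase B' → B' ≠ B₀ →
    ∀ m ∈ symmDiff B₀ B', (∀ x ∈ symmDiff B₀ B', le m x) → m ∈ B₀

/-- Deletion of a set `D` from the matroid `M`: the restriction of `M` to `M.E \ D`. -/
def mdelete (M : Matroid α) (D : Set α) : Matroid α := M ↾ (M.E \ D)

/-- Contraction of a set `C` in the matroid `M`, defined via duality:
`M / C = (M✶ \ C)✶`, a matroid on `M.E \ C`. -/
def mcontract (M : Matroid α) (C : Set α) : Matroid α := (M✶ ↾ (M.E \ C))✶

private lemma lexfirst_greedy {M : Matroid α} {le : α → α → Prop}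
    (hlin : IsLinearOrder α le) {B : Set α} (h : IsLexFirstBasis M le B)
    {e : α} (heE : e ∈ M.E) (heB : e ∉ B) :
    e ∈ M.closure (B ∩ {x | le x e ∧ x ≠ e}) := by
  haveI := hlin
  by_contra hcl
  have hIi : M.Indep (B ∩ {x | le x e ∧ x ≠ e}) := h.1.indep.subset Set.inter_subset_left
  have heI : e ∉ B ∩ {x | le x e ∧ x ≠ e} := fun h' => h'.2.2 rfl
  have hins : M.Indep (insert e (B ∩ {x | le x e ∧ x ≠ e})) := by
    rw [hIi.insert_indep_iff_of_notMem heI]; exact ⟨heE, hcl⟩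
  have hEB : insert e B ⊆ M.E := Set.insert_subset heE h.1.subset_ground
  have hspan : M.Spanning (insert e B) := h.1.spanning.superset (Set.subset_insert _ _) hEB
  obtain ⟨J, hJ, hIJ⟩ := hins.subset_isBasis_of_subset
    (Set.insert_subset_insert Set.inter_subset_left) hEB
  have hJbase : M.IsBase J := by
    refine hJ.indep.isBase_of_spanning ?_
    rw [spanning_iff_closure_eq hJ.indep.subset_ground, hJ.closure_eq_closure]
    exact hspan.closure_eq
  have heJ : e ∈ J := hIJ (Set.mem_insert _ _)
  have hJne : J ≠ B := fun hEq => heB (hEq ▸ heJ)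
  have hmem : e ∈ symmDiff B J := Set.mem_symmDiff.2 (Or.inr ⟨heJ, heB⟩)
  have hmin : ∀ x ∈ symmDiff B J, le e x := by
    intro x hx
    rcases Set.mem_symmDiff.1 hx with ⟨hxB, hxJ⟩ | ⟨hxJ, hxB⟩
    · by_contra hh
      have hxe : x ≠ e := fun hEq => heB (hEq ▸ hxB)
      have hle : le x e := (total_of le x e).resolve_right hh
      exact hxJ (hIJ (Set.mem_insert_of_mem _ ⟨hxB, hle, hxe⟩))
    · rcases Set.mem_insert_iff.1 (hJ.subset hxJ) with hEq | hxB'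
      · exact hEq ▸ refl_of le e
      · exact absurd hxB' hxB
  exact heB (h.2 J hJbase hJne e hmem hmin)

private lemma lexfirst_crit {M : Matroid α} {le : α → α → Prop}
    (hlin : IsLinearOrder α le) {B : Set α} (h : IsLexFirstBasis M le B) (x : α) :
    x ∈ B ↔ x ∈ M.E ∧ x ∉ M.closure (B ∩ {y | le y x ∧ y ≠ x}) := by
  constructor
  · intro hx
    refine ⟨h.1.subset_ground hx, fun hcl => ?_⟩
    have hsub : B ∩ {y | le y x ∧ y ≠ x} ⊆ B \ {x} := fun y hy => ⟨hy.1, hy.2.2⟩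
    exact h.1.indep.notMem_closure_diff_of_mem hx (M.closure_subset_closure hsub hcl)
  · rintro ⟨hxE, hcl⟩
    by_contra hx
    exact hcl (lexfirst_greedy hlin h hxE hx)

/-- If the linear orders `le` and `le'` differ by swapping two adjacent elements `a < b`,
then the corresponding lex-first bases of `M` either coincide or have symmetric
difference `{a, b}`. -/
theorem stmt9 [Fintype α] [DecidableEq α] (M : Matroid α)
    (le : α → α → Prop) (hlin : IsLinearOrder α le)
    (a b : α) (hab : le a b) (hne : a ≠ b)
    (hadj : ∀ c, le a c → le c b → c = a ∨ c = b)
    (le' : α → α → Prop)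
    (hle' : ∀ x y, le' x y ↔ le (Equiv.swap a b x) (Equiv.swap a b y))
    (B₁ B₂ : Set α)
    (h₁ : IsLexFirstBasis M le B₁) (h₂ : IsLexFirstBasis M le' B₂) :
    B₁ = B₂ ∨ symmDiff B₁ B₂ = {a, b} := by
  haveI := hlin
  have htrans : ∀ {x y z}, le x y → le y z → le x z := fun h1 h2 => trans_of le h1 h2
  have hanti : ∀ {x y}, le x y → le y x → x = y := fun h1 h2 => antisymm_of le h1 h2
  have htot : ∀ x y, le x y ∨ le y x := fun x y => total_of le x y
  have hrefl : ∀ x, le x x := fun x => refl_of le x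
  have hba : ¬ le b a := fun h => hne (hanti hab h)
  have hsa : Equiv.swap a b a = b := Equiv.swap_apply_left a b
  have hsb : Equiv.swap a b b = a := Equiv.swap_apply_right a b
  have hso : ∀ {x : α}, x ≠ a → x ≠ b → Equiv.swap a b x = x :=
    fun h1 h2 => Equiv.swap_apply_of_ne_of_ne h1 h2
  have hlin' : IsLinearOrder α le' :=
    { refl := fun x => (hle' x x).2 (hrefl _)
      trans := fun x y z h1 h2 => (hle' x z).2 (htrans ((hle' x y).1 h1) ((hle' y z).1 h2))
      antisymm := fun x y h1 h2 =>
        (Equiv.swap a b).injective (hanti ((hle' x y).1 h1) ((hle' y x).1 h2))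
      total := fun x y => (htot _ _).imp (hle' x y).2 (hle' y x).2 }
  have F3a : ∀ x, le x b → x ≠ a → x ≠ b → (le x a ∧ x ≠ a) := by
    intro x h hna hnb
    refine ⟨(htot x a).resolve_right fun h' => ?_, hna⟩
    exact (hadj x h' h).elim hna hnb
  have F3b : ∀ x, le a x → x ≠ a → x ≠ b → (le b x ∧ x ≠ b) := by
    intro x h hna hnb
    refine ⟨(htot b x).resolve_right fun h' => ?_, hnb⟩
    exact (hadj x h h').elim hna hnb
  -- set identities
  have SetEq1 : ∀ x, le x a → x ≠ a →
      {y | le' y x ∧ y ≠ x} = {y | le y x ∧ y ≠ x} := by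
    intro x hxa hxna
    have hxnb : x ≠ b := fun h => hba (h ▸ hxa)
    have hx' : Equiv.swap a b x = x := hso hxna hxnb
    ext y
    simp only [Set.mem_setOf_eq, hle', hx']
    constructor
    · rintro ⟨h1, h2⟩
      rcases eq_or_ne y a with rfl | hya
      · rw [hsa] at h1; exact absurd (htrans h1 hxa) hba
      rcases eq_or_ne y b with rfl | hyb
      · rw [hsb] at h1; exact absurd (hanti h1 hxa).symm hxna
      · rw [hso hya hyb] at h1; exact ⟨h1, h2⟩
    · rintro ⟨h1, h2⟩
      have hya : y ≠ a := fun h => hxna (hanti hxa (h ▸ h1))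
      have hyb : y ≠ b := fun h => hba (htrans (h ▸ h1) hxa)
      rw [hso hya hyb]; exact ⟨h1, h2⟩
  have SetEq2 : {y | le y b ∧ y ≠ b} = insert a {y | le y a ∧ y ≠ a} := by
    ext y
    simp only [Set.mem_setOf_eq, Set.mem_insert_iff]
    constructor
    · rintro ⟨h1, h2⟩
      rcases eq_or_ne y a with rfl | hya
      · exact Or.inl rfl
      · exact Or.inr (F3a y h1 hya h2)
    · rintro (rfl | ⟨h1, h2⟩)
      · exact ⟨hab, hne⟩
      · exact ⟨htrans h1 hab, fun h => hba (h ▸ h1)⟩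
  have SetEq3 : {y | le' y a ∧ y ≠ a} = insert b {y | le y a ∧ y ≠ a} := by
    ext y
    simp only [Set.mem_setOf_eq, Set.mem_insert_iff, hle', hsa]
    constructor
    · rintro ⟨h1, h2⟩
      rcases eq_or_ne y b with rfl | hyb
      · exact Or.inl rfl
      · rw [hso h2 hyb] at h1
        exact Or.inr (F3a y h1 h2 hyb)
    · rintro (rfl | ⟨h1, h2⟩)
      · rw [hsb]; exact ⟨hab, hne.symm⟩
      · have hyb : y ≠ b := fun h => hba (h ▸ h1)
        rw [hso h2 hyb]; exact ⟨htrans h1 hab, h2⟩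
  have SetEq4 : {y | le' y b ∧ y ≠ b} = {y | le y a ∧ y ≠ a} := by
    ext y
    simp only [Set.mem_setOf_eq, hle', hsb]
    constructor
    · rintro ⟨h1, h2⟩
      rcases eq_or_ne y a with rfl | hya
      · rw [hsa] at h1; exact absurd h1 hba
      · rw [hso hya h2] at h1; exact ⟨h1, hya⟩
    · rintro ⟨h1, h2⟩
      have hyb : y ≠ b := fun h => hba (h ▸ h1)
      rw [hso h2 hyb]; exact ⟨h1, hyb⟩
  have SetEq5 : ∀ x, le b x → x ≠ b →
      {y | le' y x ∧ y ≠ x} = {y | le y x ∧ y ≠ x} := by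
    intro x hbx hxnb
    have hxna : x ≠ a := fun h => hba (h ▸ hbx)
    ext y
    simp only [Set.mem_setOf_eq, hle', hso hxna hxnb]
    refine and_congr_left fun _ => ?_
    rcases eq_or_ne y a with rfl | hya
    · rw [hsa]; exact iff_of_true hbx (htrans hab hbx)
    rcases eq_or_ne y b with rfl | hyb
    · rw [hsb]; exact iff_of_true (htrans hab hbx) hbx
    · rw [hso hya hyb]
  have SetEq6 : ∀ x, le b x → x ≠ b →
      {y | le y x ∧ y ≠ x} =
        {y | le y b} ∪ {y | (le b y ∧ y ≠ b) ∧ le y x ∧ y ≠ x} := by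
    intro x hbx hxnb
    ext y
    simp only [Set.mem_setOf_eq, Set.mem_union]
    constructor
    · rintro ⟨h1, h2⟩
      rcases htot y b with h | h
      · exact Or.inl h
      · rcases eq_or_ne y b with rfl | hyb
        · exact Or.inl (hrefl y)
        · exact Or.inr ⟨⟨h, hyb⟩, h1, h2⟩
    · rintro (h | ⟨_, h2⟩)
      · exact ⟨htrans h hbx, fun he => hxnb (hanti (he ▸ h) hbx)⟩
      · exact h2
  have SetEq7 : {y | le y b} = insert a (insert b {y | le y a ∧ y ≠ a}) := by
    ext y
    simp only [Set.mem_setOf_eq, Set.mem_insert_iff]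
    constructor
    · intro h
      rcases eq_or_ne y a with rfl | hya
      · exact Or.inl rfl
      rcases eq_or_ne y b with rfl | hyb
      · exact Or.inr (Or.inl rfl)
      · exact Or.inr (Or.inr (F3a y h hya hyb))
    · rintro (rfl | rfl | ⟨h1, _⟩)
      · exact hab
      · exact hrefl y
      · exact htrans h1 hab
  -- criteria
  have crit₁ := lexfirst_crit hlin h₁
  have crit₂ := lexfirst_crit hlin' h₂
  have agree : ∀ x, M.closure (B₁ ∩ {y | le y x ∧ y ≠ x}) =
      M.closure (B₂ ∩ {y | le' y x ∧ y ≠ x}) → (x ∈ B₁ ↔ x ∈ B₂) := by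
    intro x hcl
    rw [crit₁ x, crit₂ x, hcl]
  -- well-founded strict order
  have hwf : WellFounded (fun x y => le x y ∧ x ≠ y) := by
    haveI : IsTrans α (fun x y => le x y ∧ x ≠ y) :=
      ⟨fun x y z hxy hyz => ⟨htrans hxy.1 hyz.1,
        fun hxz => hxy.2 (hanti hxy.1 (hxz ▸ hyz.1 : le y x) ▸ rfl)⟩⟩
    haveI : IsIrrefl α (fun x y => le x y ∧ x ≠ y) := ⟨fun _ h => h.2 rfl⟩
    exact Finite.wellFounded_of_trans_of_irrefl _
  -- step 1 : agreement strictly below a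
  have step1 : ∀ x, le x a → x ≠ a → (x ∈ B₁ ↔ x ∈ B₂) := by
    intro x
    induction x using hwf.induction with
    | _ x IH =>
      intro hxa hxna
      apply agree
      rw [SetEq1 x hxa hxna]
      have hsets : B₁ ∩ {y | le y x ∧ y ≠ x} = B₂ ∩ {y | le y x ∧ y ≠ x} := by
        ext y
        simp only [Set.mem_inter_iff, Set.mem_setOf_eq]
        refine and_congr_left fun h2 => ?_
        exact IH y h2 (htrans h2.1 hxa)
          (fun hya => hxna (hanti hxa (hya ▸ h2.1)))
      rw [hsets]
  have hLA : B₂ ∩ {y | le y a ∧ y ≠ a} = B₁ ∩ {y | le y a ∧ y ≠ a} := by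
    ext y
    simp only [Set.mem_inter_iff, Set.mem_setOf_eq]
    exact and_congr_left fun h2 => (step1 y h2.1 h2.2).symm
  -- criteria at a and b
  have ca1 : a ∈ B₁ ↔ a ∈ M.E ∧ a ∉ M.closure (B₁ ∩ {y | le y a ∧ y ≠ a}) := crit₁ a
  have cb1 : b ∈ B₁ ↔ b ∈ M.E ∧
      b ∉ M.closure (B₁ ∩ insert a {y | le y a ∧ y ≠ a}) := by
    rw [crit₁ b, SetEq2]
  have cb2 : b ∈ B₂ ↔ b ∈ M.E ∧ b ∉ M.closure (B₁ ∩ {y | le y a ∧ y ≠ a}) := by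
    rw [crit₂ b, SetEq4, hLA]
  have ca2 : a ∈ B₂ ↔ a ∈ M.E ∧
      a ∉ M.closure (B₂ ∩ insert b {y | le y a ∧ y ≠ a}) := by
    rw [crit₂ a, SetEq3]
  -- main case analysis
  have main : (M.closure (B₁ ∩ {y | le y b}) = M.closure (B₂ ∩ {y | le y b})) ∧
      (((a ∈ B₁ ↔ a ∈ B₂) ∧ (b ∈ B₁ ↔ b ∈ B₂)) ∨
        (a ∈ B₁ ∧ a ∉ B₂ ∧ b ∉ B₁ ∧ b ∈ B₂)) := by
    rw [SetEq7]
    by_cases ha1 : a ∈ B₁ <;> by_cases hb2 : b ∈ B₂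
    · -- a ∈ B₁, b ∈ B₂
      obtain ⟨haE, hacl⟩ := ca1.1 ha1
      obtain ⟨hbE, hbcl⟩ := cb2.1 hb2
      rw [Set.inter_insert_of_mem ha1] at cb1
      rw [Set.inter_insert_of_mem hb2, hLA] at ca2
      by_cases hb1 : b ∈ B₁
      · -- all four in
        have hbcl' := (cb1.1 hb1).2
        have ha2 : a ∈ B₂ := ca2.2 ⟨haE, fun hc =>
          hbcl' (Matroid.closure_exchange ⟨hc, hacl⟩).1⟩
        refine ⟨?_, Or.inl ⟨iff_of_true ha1 ha2, iff_of_true hb1 hb2⟩⟩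
        rw [Set.inter_insert_of_mem ha1, Set.inter_insert_of_mem hb1,
          Set.inter_insert_of_mem ha2, Set.inter_insert_of_mem hb2, hLA]
      · -- b ∈ cl (insert a L)
        have hbcl' : b ∈ M.closure (insert a (B₁ ∩ {y | le y a ∧ y ≠ a})) := by
          by_contra hc
          exact hb1 (cb1.2 ⟨hbE, hc⟩)
        have hacl' : a ∈ M.closure (insert b (B₁ ∩ {y | le y a ∧ y ≠ a})) :=
          (Matroid.closure_exchange ⟨hbcl', hbcl⟩).1
        have ha2 : a ∉ B₂ := fun h => (ca2.1 h).2 hacl'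
        refine ⟨?_, Or.inr ⟨ha1, ha2, hb1, hb2⟩⟩
        rw [Set.inter_insert_of_mem ha1, Set.inter_insert_of_notMem hb1,
          Set.inter_insert_of_notMem ha2, Set.inter_insert_of_mem hb2, hLA]
        have hLE : B₁ ∩ {y | le y a ∧ y ≠ a} ⊆ M.E :=
          Set.inter_subset_left.trans h₁.1.subset_ground
        apply subset_antisymm
        · apply M.closure_subset_closure_of_subset_closure
          refine Set.insert_subset hacl' ?_
          exact (M.subset_closure _ hLE).trans
            (M.closure_subset_closure (Set.subset_insert _ _))
        · apply M.closure_subset_closure_of_subset_closure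
          refine Set.insert_subset hbcl' ?_
          exact (M.subset_closure _ hLE).trans
            (M.closure_subset_closure (Set.subset_insert _ _))
    · -- a ∈ B₁, b ∉ B₂
      obtain ⟨haE, hacl⟩ := ca1.1 ha1
      rw [Set.inter_insert_of_notMem hb2, hLA] at ca2
      have ha2 : a ∈ B₂ := ca2.2 ⟨haE, hacl⟩
      rw [Set.inter_insert_of_mem ha1] at cb1
      have hb1 : b ∉ B₁ := by
        intro h
        obtain ⟨hbE, hbc⟩ := cb1.1 h
        refine hb2 (cb2.2 ⟨hbE, fun hc => hbc ?_⟩)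
        exact M.closure_subset_closure (Set.subset_insert _ _) hc
      refine ⟨?_, Or.inl ⟨iff_of_true ha1 ha2, iff_of_false hb1 hb2⟩⟩
      rw [Set.inter_insert_of_mem ha1, Set.inter_insert_of_notMem hb1,
        Set.inter_insert_of_mem ha2, Set.inter_insert_of_notMem hb2, hLA]
    · -- a ∉ B₁, b ∈ B₂
      obtain ⟨hbE, hbcl⟩ := cb2.1 hb2
      rw [Set.inter_insert_of_notMem ha1] at cb1
      have hb1 : b ∈ B₁ := cb1.2 ⟨hbE, hbcl⟩
      rw [Set.inter_insert_of_mem hb2, hLA] at ca2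
      have ha2 : a ∉ B₂ := by
        intro h
        obtain ⟨haE, hac⟩ := (ca2.1 h)
        refine ha1 (ca1.2 ⟨haE, fun hc => hac ?_⟩)
        exact M.closure_subset_closure (Set.subset_insert _ _) hc
      refine ⟨?_, Or.inl ⟨iff_of_false ha1 ha2, iff_of_true hb1 hb2⟩⟩
      rw [Set.inter_insert_of_notMem ha1, Set.inter_insert_of_mem hb1,
        Set.inter_insert_of_notMem ha2, Set.inter_insert_of_mem hb2, hLA]
    · -- a ∉ B₁, b ∉ B₂
      rw [Set.inter_insert_of_notMem ha1] at cb1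
      have hb1 : b ∉ B₁ := by
        intro h
        exact hb2 (cb2.2 (cb1.1 h))
      rw [Set.inter_insert_of_notMem hb2, hLA] at ca2
      have ha2 : a ∉ B₂ := by
        intro h
        exact ha1 (ca1.2 (ca2.1 h))
      refine ⟨?_, Or.inl ⟨iff_of_false ha1 ha2, iff_of_false hb1 hb2⟩⟩
      rw [Set.inter_insert_of_notMem ha1, Set.inter_insert_of_notMem hb1,
        Set.inter_insert_of_notMem ha2, Set.inter_insert_of_notMem hb2, hLA]
  -- step 4: agreement strictly above b
  have clcongr : ∀ X X' Y : Set α, M.closure X = M.closure X' →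
      M.closure (X ∪ Y) = M.closure (X' ∪ Y) := by
    intro X X' Y h
    rw [← M.closure_union_closure_left_eq, h, M.closure_union_closure_left_eq]
  have step4 : ∀ x, le b x → x ≠ b → (x ∈ B₁ ↔ x ∈ B₂) := by
    intro x
    induction x using hwf.induction with
    | _ x IH =>
      intro hbx hxnb
      apply agree
      rw [SetEq5 x hbx hxnb, SetEq6 x hbx hxnb,
        Set.inter_union_distrib_left, Set.inter_union_distrib_left]
      have hW : B₁ ∩ {y | (le b y ∧ y ≠ b) ∧ le y x ∧ y ≠ x} =
          B₂ ∩ {y | (le b y ∧ y ≠ b) ∧ le y x ∧ y ≠ x} := by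
        ext y
        simp only [Set.mem_inter_iff, Set.mem_setOf_eq]
        exact and_congr_left fun h2 => IH y h2.2 h2.1.1 h2.1.2
      rw [hW]
      exact clcongr _ _ _ main.1
  -- conclusion
  have hsub : symmDiff B₁ B₂ ⊆ {a, b} := by
    intro x hx
    by_contra hxab
    have hxa : x ≠ a := fun h => hxab (h ▸ Set.mem_insert _ _)
    have hxb : x ≠ b := fun h => hxab (h ▸ Set.mem_insert_of_mem _ rfl)
    have hmem : ¬ (x ∈ B₁ ↔ x ∈ B₂) := by
      rcases Set.mem_symmDiff.1 hx with ⟨h1, h2⟩ | ⟨h1, h2⟩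
      · exact fun h => h2 (h.1 h1)
      · exact fun h => h2 (h.2 h1)
    rcases htot x a with h | h
    · exact hmem (step1 x h hxa)
    · exact hmem (step4 x (F3b x h hxa hxb).1 hxb)
  rcases main.2 with ⟨hia, hib⟩ | ⟨ha1, ha2, hb1, hb2⟩
  · left
    have : symmDiff B₁ B₂ = ⊥ := by
      rw [Set.bot_eq_empty, Set.eq_empty_iff_forall_notMem]
      intro x hx
      have hmem : ¬ (x ∈ B₁ ↔ x ∈ B₂) := by
        rcases Set.mem_symmDiff.1 hx with ⟨h1, h2⟩ | ⟨h1, h2⟩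
        · exact fun h => h2 (h.1 h1)
        · exact fun h => h2 (h.2 h1)
      rcases hsub hx with rfl | rfl
      · exact hmem hia
      · exact hmem hib
    exact symmDiff_eq_bot.1 this
  · right
    refine hsub.antisymm ?_
    rintro x (rfl | rfl)
    · exact Set.mem_symmDiff.2 (Or.inl ⟨ha1, ha2⟩)
    · exact Set.mem_symmDiff.2 (Or.inr ⟨hb2, hb1⟩)
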